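/- Let M be a unimodular lattice and L ⊆ M a sublattice (the restricted form on L nondegenerate) such that the quotient M/L is torsion-free. Let L⊥ = {x ∈ M : ⟨x,y⟩ = 0 for all y ∈ L}. Then the discriminant groups disc(L) and disc(L⊥) are isomorphic as abelian groups. -/

import Mathlib

open Module LinearMap

universe u v

section Aux

variable {R : Type u} [CommRing R] {M A : Type v}
  [AddCommGroup M] [Module R M] [AddCommGroup A] [Module R A]

/-- If the quotient by the range of an injective map is projective, there is a retraction. -/
private lemma exists_retraction (a : A →ₗ[R] M) (ha : Function.Injective a)
    [Module.Projective R (M ⧸ LinearMap.range a)] :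
    ∃ r : M →ₗ[R] A, ∀ y : A, r (a y) = y := by
  set N := LinearMap.range a with hN
  obtain ⟨s, hs⟩ := Module.projective_lifting_property N.mkQ
    (LinearMap.id : (M ⧸ N) →ₗ[R] (M ⧸ N)) N.mkQ_surjective
  have hs' : ∀ z : M ⧸ N, N.mkQ (s z) = z := fun z => congrArg (fun g => g z) hs
  have hmem : ∀ x : M, x - s (N.mkQ x) ∈ N := by
    intro x
    rw [← Submodule.Quotient.mk_eq_zero]
    have : N.mkQ (x - s (N.mkQ x)) = 0 := by
      rw [map_sub, hs', sub_self]
    simpa [Submodule.mkQ_apply] using this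
  refine ⟨(LinearEquiv.ofInjective a ha).symm.toLinearMap ∘ₗ
    LinearMap.codRestrict N (LinearMap.id - s ∘ₗ N.mkQ) hmem, ?_⟩
  intro y
  have hy : a y ∈ N := ⟨y, rfl⟩
  have h0 : N.mkQ (a y) = 0 := by
    rwa [Submodule.mkQ_apply, Submodule.Quotient.mk_eq_zero]
  simp only [LinearMap.coe_comp, Function.comp_apply, LinearEquiv.coe_toLinearMap]
  have h1 : (LinearMap.codRestrict N (LinearMap.id - s ∘ₗ N.mkQ) hmem) (a y)
      = (⟨a y, hy⟩ : N) := by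
    apply Subtype.ext
    simp [h0]
  have h2 : (⟨a y, hy⟩ : N) = (LinearEquiv.ofInjective a ha) y := by
    apply Subtype.ext
    simp [LinearEquiv.ofInjective_apply]
  rw [h1, h2, LinearEquiv.symm_apply_apply]

private lemma dualMap_surjective_of_retraction (a : A →ₗ[R] M)
    (r : M →ₗ[R] A) (hr : ∀ y : A, r (a y) = y) :
    Function.Surjective a.dualMap := by
  intro f
  refine ⟨f ∘ₗ r, ?_⟩
  ext y
  simp [LinearMap.dualMap_apply, hr]

end Aux

/-- The main theorem, stated over a general PID `R` with abstract module injections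
replacing submodule inclusions, to avoid the `ℤ`-module instance diamond. -/
private theorem key {R : Type u} [CommRing R] [IsDomain R] [IsPrincipalIdealRing R]
    {M A P : Type v}
    [AddCommGroup M] [Module R M] [Module.Free R M] [Module.Finite R M]
    [AddCommGroup A] [Module R A] [AddCommGroup P] [Module R P]
    (B : M →ₗ[R] M →ₗ[R] R)
    (hsymm : ∀ x y, B x y = B y x)
    (hunimod : Function.Bijective B)
    (a : A →ₗ[R] M) (hainj : Function.Injective a)
    (BA : A →ₗ[R] A →ₗ[R] R)
    (hBA : ∀ x y : A, BA x y = B (a x) (a y))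
    (hBAinj : Function.Injective BA)
    (htf : ∀ (n : R) (x : M), n ≠ 0 → n • x ∈ LinearMap.range a → x ∈ LinearMap.range a)
    (p : P →ₗ[R] M) (hpinj : Function.Injective p)
    (hperp : ∀ x : M, x ∈ LinearMap.range p ↔ ∀ y : A, B x (a y) = 0)
    (BP : P →ₗ[R] P →ₗ[R] R)
    (hBP : ∀ x y : P, BP x y = B (p x) (p y)) :
    Nonempty ((Module.Dual R A ⧸ LinearMap.range BA) ≃+
      (Module.Dual R P ⧸ LinearMap.range BP)) := by
  classical
  -- basic instances
  haveI : IsNoetherian R M := isNoetherian_of_isNoetherianRing_of_finite R M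
  haveI : Module.Finite R A := Module.Finite.of_injective a hainj
  haveI : Module.Finite R P := Module.Finite.of_injective p hpinj
  haveI : NoZeroSMulDivisors R A := by
    constructor
    intro c x h
    by_cases hc : c = 0
    · exact Or.inl hc
    · refine Or.inr (hainj ?_)
      rw [map_zero]
      have : c • a x = 0 := by rw [← map_smul, h, map_zero]
      rcases smul_eq_zero.mp this with h' | h'
      · exact absurd h' hc
      · exact h'
  haveI : NoZeroSMulDivisors R P := by
    constructor
    intro c x h
    by_cases hc : c = 0
    · exact Or.inl hc
    · refine Or.inr (hpinj ?_)
      rw [map_zero]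
      have : c • p x = 0 := by rw [← map_smul, h, map_zero]
      rcases smul_eq_zero.mp this with h' | h'
      · exact absurd h' hc
      · exact h'
  haveI : Module.Free R A := Module.free_of_finite_type_torsion_free'
  -- the restriction map φ : M → Dual A
  set φ : M →ₗ[R] Module.Dual R A := a.dualMap ∘ₗ B with hφdef
  have hφ : ∀ (x : M) (y : A), φ x y = B x (a y) := fun x y => rfl
  -- φ agrees with BA on A
  have hφA : ∀ l : A, φ (a l) = BA l := by
    intro l; ext y; rw [hφ, hBA]
  -- surjectivity of φ
  haveI : Module.Finite R (M ⧸ LinearMap.range a) :=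
    Module.Finite.of_surjective (LinearMap.range a).mkQ (Submodule.mkQ_surjective _)
  haveI : NoZeroSMulDivisors R (M ⧸ LinearMap.range a) := by
    constructor
    intro c x h
    by_cases hc : c = 0
    · exact Or.inl hc
    · right
      obtain ⟨m, rfl⟩ := Submodule.mkQ_surjective _ x
      rw [Submodule.mkQ_apply, ← Submodule.Quotient.mk_smul, Submodule.Quotient.mk_eq_zero] at h
      rw [Submodule.mkQ_apply, Submodule.Quotient.mk_eq_zero]
      exact htf c m hc h
  haveI : Module.Free R (M ⧸ LinearMap.range a) := Module.free_of_finite_type_torsion_free'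
  obtain ⟨ra, hra⟩ := exists_retraction a hainj
  have hφsurj : Function.Surjective φ :=
    (dualMap_surjective_of_retraction a ra hra).comp hunimod.2
  -- kernel of φ is range p
  have hkerφ : LinearMap.ker φ = LinearMap.range p := by
    ext x
    rw [LinearMap.mem_ker, hperp x]
    constructor
    · intro h y
      exact congrArg (fun g => g y) h
    · intro h
      ext y
      exact h y
  -- Dual A / range BA is torsion
  have htorA : ∀ f : Module.Dual R A, ∃ n : R, n ≠ 0 ∧ n • f ∈ LinearMap.range BA := by
    have h1 := Submodule.rank_quotient_add_rank (LinearMap.range BA)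
    have h2 := lift_rank_range_of_injective BA hBAinj
    have h3 := (Module.Free.chooseBasis R A).dual_rank_eq
    have h2' : Module.rank R (LinearMap.range BA) = Module.rank R (Module.Dual R A) := by
      rw [h3]
      have := h2
      rwa [Cardinal.lift_id', Cardinal.lift_umax.{v, u}] at this
    rw [h2'] at h1
    have hfin : Module.rank R (Module.Dual R A) < Cardinal.aleph0 :=
      Module.rank_lt_aleph0 R (Module.Dual R A)
    have h0 : Module.rank R (Module.Dual R A ⧸ LinearMap.range BA) = 0 := by
      rcases Cardinal.add_eq_right_iff.mp h1 with h | h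
      · exact absurd (le_trans (le_max_left _ _) h) (not_le.mpr hfin)
      · exact h
    intro f
    obtain ⟨n, hn, hnf⟩ := rank_eq_zero_iff.mp h0 (Submodule.Quotient.mk f)
    refine ⟨n, hn, ?_⟩
    rwa [← Submodule.Quotient.mk_smul, Submodule.Quotient.mk_eq_zero] at hnf
  -- the key submodule K
  set K : Submodule R M := LinearMap.range a ⊔ LinearMap.range p with hK
  -- comap φ of range BA is K
  have hcomapφ : Submodule.comap φ (LinearMap.range BA) = K := by
    apply le_antisymm
    · intro x hx
      obtain ⟨l, hl⟩ := hx
      have h0 : φ (x - a l) = 0 := by rw [map_sub, hφA, hl, sub_self]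
      have hxl : x - a l ∈ LinearMap.range p := by rw [← hkerφ]; exact h0
      have hx' : x = a l + (x - a l) := by abel
      rw [hx']
      exact Submodule.add_mem_sup ⟨l, rfl⟩ hxl
    · rw [sup_le_iff]
      constructor
      · rintro x ⟨l, rfl⟩
        exact ⟨l, (hφA l).symm⟩
      · intro x hx
        refine ⟨0, ?_⟩
        rw [map_zero]
        symm
        ext y
        exact (hperp x).mp hx y
  -- M / K is torsion
  have hKtor : ∀ x : M, ∃ n : R, n ≠ 0 ∧ n • x ∈ K := by
    intro x
    obtain ⟨n, hn, hmem⟩ := htorA (φ x)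
    refine ⟨n, hn, ?_⟩
    rw [← hcomapφ]
    show φ (n • x) ∈ LinearMap.range BA
    rwa [map_smul]
  -- the restriction map ψ : M → Dual P
  set ψ : M →ₗ[R] Module.Dual R P := p.dualMap ∘ₗ B with hψdef
  have hψ : ∀ (x : M) (y : P), ψ x y = B x (p y) := fun x y => rfl
  have hψP : ∀ q : P, ψ (p q) = BP q := by
    intro q; ext y; rw [hψ, hBP]
  -- kernel of ψ is range a  (the hard part)
  have hkerψ : LinearMap.ker ψ = LinearMap.range a := by
    apply le_antisymm
    · intro x hx
      have hx' : ∀ y : P, B x (p y) = 0 := by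
        intro y
        exact congrArg (fun g => g y) (LinearMap.mem_ker.mp hx)
      obtain ⟨n, hn, hnx⟩ := hKtor x
      rw [hK] at hnx
      obtain ⟨la, hla, lp, hlp, hsum⟩ := Submodule.mem_sup.mp hnx
      obtain ⟨l, rfl⟩ := hla
      obtain ⟨q, rfl⟩ := hlp
      -- show B (p q) = 0
      have hBq : B (p q) = 0 := by
        ext m
        obtain ⟨k, hk, hkm⟩ := hKtor m
        obtain ⟨la', hla', lp', hlp', hsum'⟩ := Submodule.mem_sup.mp hkm
        obtain ⟨l', rfl⟩ := hla'
        obtain ⟨q', rfl⟩ := hlp'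
        have h1 : B (p q) (a l') = 0 := (hperp (p q)).mp ⟨q, rfl⟩ l'
        have h2 : B (p q) (p q') = 0 := by
          have hpq : p q = n • x - a l := by rw [← hsum]; abel
          rw [hpq, map_sub, map_smul]
          have hxq' : B x (p q') = 0 := hx' q'
          have hlq' : B (a l) (p q') = 0 := by
            rw [hsymm]
            exact (hperp (p q')).mp ⟨q', rfl⟩ l
          simp [hxq', hlq']
        have h3 : k • B (p q) m = 0 := by
          have : B (p q) (k • m) = 0 := by
            rw [← hsum', map_add, h1, h2, add_zero]
          rwa [map_smul] at this
        rw [smul_eq_mul] at h3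
        rcases mul_eq_zero.mp h3 with h | h
        · exact absurd h hk
        · simpa using h
      have hq0 : p q = 0 := by
        apply hunimod.1
        rw [hBq, map_zero]
      have hnxa : n • x ∈ LinearMap.range a := by
        rw [← hsum, hq0, add_zero]
        exact ⟨l, rfl⟩
      exact htf n x hn hnxa
    · rintro x ⟨l, rfl⟩
      ext y
      show B (a l) (p y) = 0
      rw [hsymm]
      exact (hperp (p y)).mp ⟨y, rfl⟩ l
  -- M / range p is torsion-free, hence ψ is surjective
  haveI : Module.Finite R (M ⧸ LinearMap.range p) :=
    Module.Finite.of_surjective (LinearMap.range p).mkQ (Submodule.mkQ_surjective _)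
  haveI hDualNZ : NoZeroSMulDivisors R (Module.Dual R A) := by
    constructor
    intro c f h
    by_cases hc : c = 0
    · exact Or.inl hc
    · right
      ext y
      have := congrArg (fun g => g y) h
      simp only [LinearMap.smul_apply, LinearMap.zero_apply, smul_eq_mul] at this
      rcases mul_eq_zero.mp this with h' | h'
      · exact absurd h' hc
      · simpa using h'
  haveI : NoZeroSMulDivisors R (M ⧸ LinearMap.range p) := by
    have hle : LinearMap.range p ≤ LinearMap.ker φ := hkerφ.ge
    set j : (M ⧸ LinearMap.range p) →ₗ[R] Module.Dual R A :=
      (LinearMap.range p).liftQ φ hle with hj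
    have hjinj : Function.Injective j :=
      LinearMap.ker_eq_bot.mp
        (Submodule.ker_liftQ_eq_bot (LinearMap.range p) φ hle hkerφ.le)
    constructor
    intro c z hz
    by_cases hc : c = 0
    · exact Or.inl hc
    · right
      apply hjinj
      rw [map_zero]
      have hjz : c • j z = 0 := by rw [← map_smul, hz, map_zero]
      rcases smul_eq_zero.mp hjz with h | h
      · exact absurd h hc
      · exact h
  haveI : Module.Free R (M ⧸ LinearMap.range p) := Module.free_of_finite_type_torsion_free'
  obtain ⟨rp, hrp⟩ := exists_retraction p hpinj
  have hψsurj : Function.Surjective ψ :=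
    (dualMap_surjective_of_retraction p rp hrp).comp hunimod.2
  -- comap ψ of range BP is K
  have hcomapψ : Submodule.comap ψ (LinearMap.range BP) = K := by
    apply le_antisymm
    · intro x hx
      obtain ⟨q, hq⟩ := hx
      have h0 : ψ (x - p q) = 0 := by rw [map_sub, hψP, hq, sub_self]
      have hxq : x - p q ∈ LinearMap.range a := by rw [← hkerψ]; exact h0
      have hx' : x = (x - p q) + p q := by abel
      rw [hx']
      exact Submodule.add_mem_sup hxq ⟨q, rfl⟩
    · rw [sup_le_iff]
      constructor
      · rintro x ⟨l, rfl⟩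
        refine ⟨0, ?_⟩
        rw [map_zero]
        symm
        ext y
        show B (a l) (p y) = 0
        rw [hsymm]
        exact (hperp (p y)).mp ⟨y, rfl⟩ l
      · rintro x ⟨q, rfl⟩
        exact ⟨q, (hψP q).symm⟩
  -- assemble the two equivalences
  have hker1 : LinearMap.ker ((LinearMap.range BA).mkQ ∘ₗ φ) = K := by
    rw [LinearMap.ker_comp, Submodule.ker_mkQ, hcomapφ]
  have hker2 : LinearMap.ker ((LinearMap.range BP).mkQ ∘ₗ ψ) = K := by
    rw [LinearMap.ker_comp, Submodule.ker_mkQ, hcomapψ]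
  have e1 : (M ⧸ K) ≃ₗ[R] (Module.Dual R A ⧸ LinearMap.range BA) := by
    refine LinearEquiv.ofBijective
      (K.liftQ ((LinearMap.range BA).mkQ ∘ₗ φ) hker1.ge) ⟨?_, ?_⟩
    · exact LinearMap.ker_eq_bot.mp (Submodule.ker_liftQ_eq_bot K _ hker1.ge hker1.le)
    · rw [← LinearMap.range_eq_top, Submodule.range_liftQ, LinearMap.range_eq_top]
      exact (Submodule.mkQ_surjective _).comp hφsurj
  have e2 : (M ⧸ K) ≃ₗ[R] (Module.Dual R P ⧸ LinearMap.range BP) := by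
    refine LinearEquiv.ofBijective
      (K.liftQ ((LinearMap.range BP).mkQ ∘ₗ ψ) hker2.ge) ⟨?_, ?_⟩
    · exact LinearMap.ker_eq_bot.mp (Submodule.ker_liftQ_eq_bot K _ hker2.ge hker2.le)
    · rw [← LinearMap.range_eq_top, Submodule.range_liftQ, LinearMap.range_eq_top]
      exact (Submodule.mkQ_surjective _).comp hψsurj
  exact ⟨(e1.symm.trans e2).toAddEquiv⟩

/-- let `M` be a unimodular lattice, `L ⊆ M` a sublattice on which
the restricted form is nondegenerate, with `M/L` torsion-free, and let
`L⊥ = {x ∈ M | ⟨x,y⟩ = 0 ∀ y ∈ L}`.  Then `disc(L) ≅ disc(L⊥)` as abelian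
groups. Sublattices are modelled as submodules carrying the restricted form. -/
theorem stmt4 {M : Type*} [AddCommGroup M] [Module ℤ M]
    [Module.Free ℤ M] [Module.Finite ℤ M]
    (B : M →ₗ[ℤ] M →ₗ[ℤ] ℤ)
    (hsymm : ∀ x y, B x y = B y x)
    (hunimod : Function.Bijective B)
    (L : Submodule ℤ M)
    (BL : L →ₗ[ℤ] L →ₗ[ℤ] ℤ)
    (hBL : ∀ x y : L, BL x y = B x y)
    (hLnondeg : LinearMap.ker BL = ⊥)
    (htf : NoZeroSMulDivisors ℤ (M ⧸ L))
    (Lperp : Submodule ℤ M)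
    (hLperp : ∀ x : M, x ∈ Lperp ↔ ∀ y ∈ L, B x y = 0)
    (Bperp : Lperp →ₗ[ℤ] Lperp →ₗ[ℤ] ℤ)
    (hBperp : ∀ x y : Lperp, Bperp x y = B x y) :
    Nonempty ((Module.Dual ℤ L ⧸ LinearMap.range BL) ≃+
      (Module.Dual ℤ Lperp ⧸ LinearMap.range Bperp)) := by
  classical
  -- the inclusion maps, built by hand w.r.t. the canonical `ℤ`-module structures
  set ι : L →ₗ[ℤ] M :=
    { toFun := fun x => (x : M)
      map_add' := fun _ _ => rfl
      map_smul' := fun n x => by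
        have h3 := Int.cast_smul_eq_zsmul ℤ n (x : M)
        rw [Int.cast_id] at h3
        simp only [RingHom.id_apply]
        rw [h3]
        rfl } with hι
  set ιp : Lperp →ₗ[ℤ] M :=
    { toFun := fun x => (x : M)
      map_add' := fun _ _ => rfl
      map_smul' := fun n x => by
        have h3 := Int.cast_smul_eq_zsmul ℤ n (x : M)
        rw [Int.cast_id] at h3
        simp only [RingHom.id_apply]
        rw [h3]
        rfl } with hιp
  have hιinj : Function.Injective ι := fun x y h => Subtype.ext h
  have hιpinj : Function.Injective ιp := fun x y h => Subtype.ext h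
  have hιrange : LinearMap.range ι = L := by
    ext x
    constructor
    · rintro ⟨y, rfl⟩; exact y.2
    · intro hx; exact ⟨⟨x, hx⟩, rfl⟩
  have hιprange : LinearMap.range ιp = Lperp := by
    ext x
    constructor
    · rintro ⟨y, rfl⟩; exact y.2
    · intro hx; exact ⟨⟨x, hx⟩, rfl⟩
  -- torsion-freeness of M/L, in terms of `zsmul`
  have htfz : ∀ (n : ℤ) (x : M), n ≠ 0 → n • x ∈ L → x ∈ L := by
    intro n x hn hnx
    have h1 : n • (L.mkQ x) = 0 := by
      rw [← map_zsmul L.mkQ n x, Submodule.mkQ_apply, Submodule.Quotient.mk_eq_zero]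
      exact hnx
    rcases htf.eq_zero_or_eq_zero_of_smul_eq_zero h1 with h | h
    · exact absurd h hn
    · rw [Submodule.mkQ_apply, Submodule.Quotient.mk_eq_zero] at h
      exact h
  -- the orthogonality condition, reformulated
  have hperp' : ∀ x : M, x ∈ LinearMap.range ιp ↔ ∀ y : L, B x (ι y) = 0 := by
    intro x
    rw [hιprange, hLperp]
    constructor
    · intro h y; exact h y y.2
    · intro h y hy; exact h ⟨y, hy⟩
  exact key B hsymm hunimod ι hιinj BL (fun x y => hBL x y)
    (LinearMap.ker_eq_bot.mp hLnondeg)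
    (fun n x hn hnx => by
      rw [hιrange] at hnx ⊢
      have h3 := Int.cast_smul_eq_zsmul ℤ n x
      rw [Int.cast_id] at h3
      rw [h3] at hnx
      exact htfz n x hn hnx)
    ιp hιpinj hperp' Bperp (fun x y => hBperp x y)
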